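/- Convergence of multiple zeta values: let r ≥ 1 and let n₁,…,n_r be integers with n_i ≥ 1 for all i and n_r ≥ 2. Then the family (1/(k₁^{n₁}⋯k_r^{n_r})), indexed by tuples of integers 0 < k₁ < k₂ < ⋯ < k_r, is summable. -/

import Mathlib

set_option maxHeartbeats 1000000

open Finset

lemma tail_summable (a : ℕ) :
    Summable (fun m : {m : ℕ // a < m} => (1:ℝ) / (m : ℝ) ^ 2) :=
  (Real.summable_one_div_nat_pow.mpr one_lt_two).comp_injective Subtype.coe_injective

lemma sum_Ioc_sq_le (a : ℕ) (ha : 1 ≤ a) (N : ℕ) :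
    ∑ m ∈ Finset.Ioc a N, (1:ℝ) / (m : ℝ) ^ 2 ≤ 1 / a := by
  have ha0 : (0:ℝ) < a := by exact_mod_cast ha
  rcases le_or_gt a N with h | h
  · have key : ∀ N, a ≤ N → ∑ m ∈ Finset.Ioc a N, (1:ℝ) / (m : ℝ) ^ 2 ≤ 1 / a - 1 / N := by
      intro N hN
      induction N, hN using Nat.le_induction with
      | base => simp
      | succ N hN ihN =>
        rw [Finset.sum_Ioc_succ_top (by omega)]
        have hN0 : (0:ℝ) < N := by
          have : (1:ℕ) ≤ N := le_trans ha hN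
          exact_mod_cast this
        have hstep : (1:ℝ) / ((N:ℝ) + 1) ^ 2 ≤ 1 / N - 1 / (N + 1) := by
          rw [div_sub_div _ _ (ne_of_gt hN0) (by positivity),
            div_le_div_iff₀ (by positivity) (by positivity)]
          ring_nf
          nlinarith
        push_cast
        linarith
    have := key N h
    have hN0 : (0:ℝ) ≤ 1 / (N:ℝ) := by positivity
    linarith
  · rw [Finset.Ioc_eq_empty (by omega)]
    simp

lemma tail_tsum_le (a : ℕ) (ha : 1 ≤ a) :
    ∑' m : {m : ℕ // a < m}, (1:ℝ) / (m : ℝ) ^ 2 ≤ 1 / a := by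
  refine Summable.tsum_le_of_sum_le (tail_summable a) fun s => ?_
  classical
  have himg : ∑ x ∈ s, (1:ℝ) / (x.1 : ℝ) ^ 2
      = ∑ m ∈ s.image Subtype.val, (1:ℝ) / (m : ℝ) ^ 2 := by
    rw [Finset.sum_image (fun x _ y _ h => Subtype.coe_injective h)]
  rw [himg]
  have hsub : s.image Subtype.val ⊆ Finset.Ioc a ((s.image Subtype.val).sup id) := by
    intro m hm
    simp only [Finset.mem_image] at hm
    obtain ⟨x, hx, rfl⟩ := hm
    refine Finset.mem_Ioc.mpr ⟨x.2, ?_⟩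
    exact Finset.le_sup (f := id) (Finset.mem_image_of_mem _ hx)
  calc ∑ m ∈ s.image Subtype.val, (1:ℝ) / (m : ℝ) ^ 2
      ≤ ∑ m ∈ Finset.Ioc a ((s.image Subtype.val).sup id), (1:ℝ) / (m : ℝ) ^ 2 :=
        Finset.sum_le_sum_of_subset_of_nonneg hsub (by intros; positivity)
    _ ≤ 1 / a := sum_Ioc_sq_le a ha _

lemma strictMono_snoc {r : ℕ} (t : Fin (r + 1) → ℕ) (m : ℕ) (ht : StrictMono t)
    (hm : t (Fin.last r) < m) : StrictMono (Fin.snoc t m : Fin (r + 2) → ℕ) := by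
  rw [Fin.strictMono_iff_lt_succ]
  intro i
  rcases Fin.eq_castSucc_or_eq_last i with ⟨j, rfl⟩ | rfl
  · rw [Fin.succ_castSucc, Fin.snoc_castSucc, Fin.snoc_castSucc]
    exact ht (Fin.castSucc_lt_succ : j.castSucc < j.succ)
  · rw [Fin.succ_last, Fin.snoc_last, Fin.snoc_castSucc]
    exact hm

/-- The dominating family `∏ 1/k_i · 1/k_last²` is summable over strictly increasing
positive tuples. -/
lemma mzv_aux (r : ℕ) :
    Summable (fun k : {k : Fin (r + 1) → ℕ // StrictMono k ∧ ∀ i, 0 < k i} =>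
      (∏ i : Fin r, (1 : ℝ) / (k.1 i.castSucc : ℝ)) * (1 / (k.1 (Fin.last r) : ℝ) ^ 2)) := by
  induction r with
  | zero =>
    have hbase : Summable (fun m : ℕ => (1:ℝ) / (m : ℝ) ^ 2) :=
      Real.summable_one_div_nat_pow.mpr one_lt_two
    have hinj : Function.Injective
        (fun k : {k : Fin 1 → ℕ // StrictMono k ∧ ∀ i, 0 < k i} => k.1 0) := by
      intro x y h
      apply Subtype.ext
      funext i
      have : i = 0 := Subsingleton.elim _ _
      rw [this]; exact h
    exact ((hbase.comp_injective hinj).congr fun k => by simp [Fin.last])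
  | succ r ih =>
    set T := fun (s : ℕ) => {k : Fin (s + 1) → ℕ // StrictMono k ∧ ∀ i, 0 < k i} with hT
    set F : (Σ t : T r, {m : ℕ // t.1 (Fin.last r) < m}) → T (r + 1) := fun p =>
      ⟨Fin.snoc p.1.1 p.2.1, strictMono_snoc _ _ p.1.2.1 p.2.2, fun i => by
        rcases Fin.eq_castSucc_or_eq_last i with ⟨j, rfl⟩ | rfl
        · rw [Fin.snoc_castSucc]; exact p.1.2.2 j
        · rw [Fin.snoc_last]; exact lt_trans (p.1.2.2 _) p.2.2⟩ with hF
    have hbij : Function.Bijective F := by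
      constructor
      · rintro ⟨⟨t, ht⟩, ⟨m, hm⟩⟩ ⟨⟨t', ht'⟩, ⟨m', hm'⟩⟩ h
        have hval : (Fin.snoc t m : Fin (r + 2) → ℕ) = Fin.snoc t' m' :=
          congrArg Subtype.val h
        have h1 : t = t' := by
          have := congrArg Fin.init hval
          rwa [Fin.init_snoc, Fin.init_snoc] at this
        have h2 : m = m' := by
          have := congrFun hval (Fin.last (r + 1))
          rwa [Fin.snoc_last, Fin.snoc_last] at this
        subst h1; subst h2; rfl
      · rintro ⟨k, hk, hkpos⟩
        refine ⟨⟨⟨Fin.init k, fun i j hij => hk (Fin.castSucc_lt_castSucc_iff.mpr hij),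
          fun i => hkpos _⟩, ⟨k (Fin.last (r + 1)), hk (Fin.castSucc_lt_last (Fin.last r))⟩⟩, ?_⟩
        exact Subtype.ext (Fin.snoc_init_self k)
    have hg : Summable (fun p : Σ t : T r, {m : ℕ // t.1 (Fin.last r) < m} =>
        (∏ i : Fin (r + 1), (1 : ℝ) / (p.1.1 i : ℝ)) * (1 / (p.2.1 : ℝ) ^ 2)) := by
      refine (summable_sigma_of_nonneg fun p => mul_nonneg
        (Finset.prod_nonneg fun i _ => by positivity) (by positivity)).mpr ⟨fun t => ?_, ?_⟩
      · show Summable fun m : {m : ℕ // t.1 (Fin.last r) < m} =>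
          (∏ i : Fin (r + 1), (1 : ℝ) / (t.1 i : ℝ)) * (1 / (m.1 : ℝ) ^ 2)
        exact (tail_summable _).mul_left _
      apply Summable.of_nonneg_of_le (f := fun t : T r =>
        (∏ i : Fin r, (1 : ℝ) / (t.1 i.castSucc : ℝ)) * (1 / (t.1 (Fin.last r) : ℝ) ^ 2))
        (fun t => tsum_nonneg fun m => mul_nonneg
          (Finset.prod_nonneg fun i _ => by positivity) (by positivity)) ?_ ih
      intro t
      have hc : (0:ℝ) ≤ ∏ i : Fin (r + 1), (1 : ℝ) / (t.1 i : ℝ) := by positivity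
      show ∑' m : {m : ℕ // t.1 (Fin.last r) < m},
          (∏ i : Fin (r + 1), (1 : ℝ) / (t.1 i : ℝ)) * (1 / (m.1 : ℝ) ^ 2)
        ≤ (∏ i : Fin r, (1 : ℝ) / (t.1 i.castSucc : ℝ)) * (1 / (t.1 (Fin.last r) : ℝ) ^ 2)
      rw [tsum_mul_left]
      have hlast : 1 ≤ t.1 (Fin.last r) := t.2.2 _
      calc (∏ i : Fin (r + 1), (1 : ℝ) / (t.1 i : ℝ)) *
            ∑' m : {m : ℕ // t.1 (Fin.last r) < m}, (1:ℝ) / (m : ℝ) ^ 2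
          ≤ (∏ i : Fin (r + 1), (1 : ℝ) / (t.1 i : ℝ)) * (1 / (t.1 (Fin.last r) : ℝ)) :=
            mul_le_mul_of_nonneg_left (tail_tsum_le _ hlast) hc
        _ = (∏ i : Fin r, (1 : ℝ) / (t.1 i.castSucc : ℝ)) *
              (1 / (t.1 (Fin.last r) : ℝ) ^ 2) := by
            rw [Fin.prod_univ_castSucc]
            ring
    refine ((Equiv.ofBijective F hbij).summable_iff
      (f := fun k : T (r + 1) => (∏ i : Fin (r + 1), (1 : ℝ) / (k.1 i.castSucc : ℝ)) *
        (1 / (k.1 (Fin.last (r + 1)) : ℝ) ^ 2))).mp (hg.congr fun p => ?_)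
    show (∏ i : Fin (r + 1), (1 : ℝ) / (p.1.1 i : ℝ)) * (1 / (p.2.1 : ℝ) ^ 2)
      = (∏ i : Fin (r + 1), (1 : ℝ) / ((F p).1 i.castSucc : ℝ)) *
        (1 / ((F p).1 (Fin.last (r + 1)) : ℝ) ^ 2)
    simp only [hF, Fin.snoc_castSucc, Fin.snoc_last]

theorem mzv_summable (r : ℕ) (n : Fin (r + 1) → ℕ) (h1 : ∀ i, 1 ≤ n i)
    (h2 : 2 ≤ n (Fin.last r)) :
    Summable (fun k : {k : Fin (r + 1) → ℕ // StrictMono k ∧ ∀ i, 0 < k i} =>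
      ∏ i, (1 : ℝ) / (k.1 i : ℝ) ^ n i) := by
  apply Summable.of_nonneg_of_le (fun k => by positivity) ?_ (mzv_aux r)
  intro k
  have hpos : ∀ i, (1:ℝ) ≤ (k.1 i : ℝ) := fun i => by exact_mod_cast k.2.2 i
  rw [Fin.prod_univ_castSucc]
  have h₁ : ∀ i : Fin r, (1 : ℝ) / (k.1 i.castSucc : ℝ) ^ n i.castSucc
      ≤ 1 / (k.1 i.castSucc : ℝ) := fun i => by
    apply one_div_le_one_div_of_le (by linarith [hpos i.castSucc])
    calc (k.1 i.castSucc : ℝ) = (k.1 i.castSucc : ℝ) ^ 1 := (pow_one _).symm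
      _ ≤ (k.1 i.castSucc : ℝ) ^ n i.castSucc :=
        pow_le_pow_right₀ (hpos _) (h1 _)
  have h₂ : (1 : ℝ) / (k.1 (Fin.last r) : ℝ) ^ n (Fin.last r)
      ≤ 1 / (k.1 (Fin.last r) : ℝ) ^ 2 := by
    apply one_div_le_one_div_of_le (pow_pos (by linarith [hpos (Fin.last r)]) 2)
    exact pow_le_pow_right₀ (hpos _) h2
  exact mul_le_mul (Finset.prod_le_prod (fun i _ => by positivity) fun i _ => h₁ i)
    h₂ (by positivity) (by positivity)
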